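/- Let (G,·,∘) be a bi-skew brace with gamma function γ. Then every subgroup of the group (G,∘) is a left ideal of (G,·,∘) if and only if for every σ ∈ G the automorphism γ(σ) is a power automorphism of (G,∘), i.e., for every τ ∈ G there is an integer n with γ(σ)(τ) = τ^n, the power computed in (G,∘). -/

import Mathlib

def IsSkewBrace {G : Type*} (dot circ : Group G) : Prop :=
  ∀ σ τ κ : G,
    circ.mul σ (dot.mul τ κ) =
      dot.mul (dot.mul (circ.mul σ τ) (dot.inv σ)) (circ.mul σ κ)

def gammaFun {G : Type*} (dot circ : Group G) (σ τ : G) : G :=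
  dot.mul (dot.inv σ) (circ.mul σ τ)

def IsSubgroupOf {G : Type*} (S : Group G) (H : Set G) : Prop :=
  S.one ∈ H ∧ (∀ a ∈ H, ∀ b ∈ H, S.mul a b ∈ H) ∧ (∀ a ∈ H, S.inv a ∈ H)

def IsLeftIdeal {G : Type*} (dot circ : Group G) (H : Set G) : Prop :=
  IsSubgroupOf dot H ∧ ∀ σ : G, ∀ τ ∈ H, gammaFun dot circ σ τ ∈ H

def IsStrongLeftIdeal {G : Type*} (dot circ : Group G) (H : Set G) : Prop :=
  IsLeftIdeal dot circ H ∧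
    ∀ σ : G, ∀ τ ∈ H, dot.mul (dot.mul σ τ) (dot.inv σ) ∈ H

def IsCharacteristicSubgroupOf {G : Type*} (S : Group G) (H : Set G) : Prop :=
  IsSubgroupOf S H ∧
    ∀ f : G ≃ G, (∀ a b : G, f (S.mul a b) = S.mul (f a) (f b)) → ∀ a ∈ H, f a ∈ H

def oppGroup {G : Type*} (dot : Group G) : Group G :=
  letI := dot
  { mul := fun a b => b * a
    one := (1 : G)
    inv := fun a => a⁻¹
    div := fun a b => b⁻¹ * a
    npow := fun n x => @npowRec G ⟨(1 : G)⟩ ⟨fun a b => b * a⟩ n x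
    npow_zero := fun _ => rfl
    npow_succ := fun _ _ => rfl
    zpow := fun n x =>
      @zpowRec G ⟨(1 : G)⟩ ⟨fun a b => b * a⟩ ⟨fun a => a⁻¹⟩
        (@npowRec G ⟨(1 : G)⟩ ⟨fun a b => b * a⟩) n x
    zpow_zero' := fun _ => rfl
    zpow_succ' := fun _ _ => rfl
    zpow_neg' := fun _ _ => rfl
    div_eq_mul_inv := fun _ _ => rfl
    mul_assoc := fun a b c => (mul_assoc c b a).symm
    one_mul := fun a => mul_one a
    mul_one := fun a => one_mul a
    inv_mul_cancel := fun a => mul_inv_cancel a }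

def lam {G : Type*} (S : Group G) (σ : G) : Equiv.Perm G :=
  letI := S; Equiv.mulLeft σ

def rho {G : Type*} (S : Group G) (σ : G) : Equiv.Perm G :=
  letI := S; Equiv.mulRight σ⁻¹

section Aux10

variable {G : Type*}

private lemma gone_mul' (S : Group G) (a : G) : S.mul S.one a = a := by
  letI := S; exact one_mul a

private lemma gmul_inv' (S : Group G) (a : G) : S.mul a (S.inv a) = S.one := by
  letI := S; exact mul_inv_cancel a

private lemma zpow_mem' (circ : Group G) {H : Set G} (hH : IsSubgroupOf circ H)
    {τ : G} (hτ : τ ∈ H) : ∀ n : ℤ, circ.zpow n τ ∈ H := by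
  letI := circ
  have key : ∀ n : ℤ, τ ^ n ∈ H := by
    intro n
    induction n using Int.induction_on with
    | zero => rw [zpow_zero]; exact hH.1
    | succ k ih => rw [zpow_add_one]; exact hH.2.1 _ ih _ hτ
    | pred k ih => rw [zpow_sub_one]; exact hH.2.1 _ ih _ (hH.2.2 τ hτ)
  exact key

private lemma circ_mul_dot_one' (dot circ : Group G) (h1 : IsSkewBrace dot circ) (σ : G) :
    circ.mul σ dot.one = σ := by
  letI := dot
  have h : circ.mul σ ((1 : G) * 1) = circ.mul σ 1 * σ⁻¹ * circ.mul σ 1 := h1 σ 1 1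
  rw [one_mul] at h
  have h2 : circ.mul σ 1 * 1 = circ.mul σ 1 * (σ⁻¹ * circ.mul σ 1) := by
    rw [mul_one, ← mul_assoc]; exact h
  have h3 := (mul_left_cancel h2).symm
  show circ.mul σ (1 : G) = σ
  exact (inv_mul_eq_one.mp h3).symm

private lemma one_eq' (dot circ : Group G) (h1 : IsSkewBrace dot circ) :
    dot.one = circ.one := by
  have ha := circ_mul_dot_one' dot circ h1 circ.one
  have hb : circ.mul circ.one dot.one = dot.one := gone_mul' circ dot.one
  rw [hb] at ha; exact ha

private lemma circ_mul_eq' (dot circ : Group G) (σ τ : G) :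
    circ.mul σ τ = dot.mul σ (gammaFun dot circ σ τ) := by
  letI := dot
  show circ.mul σ τ = σ * (σ⁻¹ * circ.mul σ τ)
  rw [← mul_assoc, mul_inv_cancel, one_mul]

private lemma circ_mul_inv' (dot circ : Group G) (h1 : IsSkewBrace dot circ) (σ τ : G) :
    circ.mul σ (dot.inv τ) = dot.mul (dot.mul σ (dot.inv (circ.mul σ τ))) σ := by
  letI := dot
  show circ.mul σ τ⁻¹ = σ * (circ.mul σ τ)⁻¹ * σ
  have h : circ.mul σ (τ * τ⁻¹) = circ.mul σ τ * σ⁻¹ * circ.mul σ τ⁻¹ := h1 σ τ τ⁻¹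
  rw [mul_inv_cancel] at h
  have h0 : circ.mul σ (1 : G) = σ := circ_mul_dot_one' dot circ h1 σ
  rw [h0] at h
  -- h : σ = circ.mul σ τ * σ⁻¹ * circ.mul σ τ⁻¹
  have h2 : (circ.mul σ τ)⁻¹ * σ = σ⁻¹ * circ.mul σ τ⁻¹ := by
    have hc := congrArg (fun x => (circ.mul σ τ)⁻¹ * x) h
    simpa [mul_assoc] using hc
  rw [mul_assoc, h2, ← mul_assoc, mul_inv_cancel, one_mul]

private lemma gamma_comp' (dot circ : Group G) (h1 : IsSkewBrace dot circ) (σ τ κ : G) :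
    gammaFun dot circ σ (gammaFun dot circ τ κ) = gammaFun dot circ (circ.mul σ τ) κ := by
  letI := dot
  show σ⁻¹ * circ.mul σ (τ⁻¹ * circ.mul τ κ)
      = (circ.mul σ τ)⁻¹ * circ.mul (circ.mul σ τ) κ
  have h : circ.mul σ (τ⁻¹ * circ.mul τ κ)
      = circ.mul σ τ⁻¹ * σ⁻¹ * circ.mul σ (circ.mul τ κ) := h1 σ τ⁻¹ (circ.mul τ κ)
  rw [h]
  have hassoc : circ.mul σ (circ.mul τ κ) = circ.mul (circ.mul σ τ) κ := by
    letI := circ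
    exact (mul_assoc σ τ κ).symm
  have hinv : circ.mul σ τ⁻¹ = σ * (circ.mul σ τ)⁻¹ * σ := circ_mul_inv' dot circ h1 σ τ
  rw [hassoc, hinv]
  group

private lemma gamma_one' (dot circ : Group G) (h1 : IsSkewBrace dot circ) (κ : G) :
    gammaFun dot circ circ.one κ = κ := by
  letI := dot
  show (circ.one)⁻¹ * circ.mul circ.one κ = κ
  have hc : circ.mul circ.one κ = κ := gone_mul' circ κ
  have hone : circ.one = (1 : G) := (one_eq' dot circ h1).symm
  rw [hc, hone, inv_one, one_mul]

private lemma gamma_inv_gamma' (dot circ : Group G) (h1 : IsSkewBrace dot circ) (σ κ : G) :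
    gammaFun dot circ σ (gammaFun dot circ (circ.inv σ) κ) = κ := by
  rw [gamma_comp' dot circ h1]
  rw [gmul_inv' circ σ, gamma_one' dot circ h1]

private lemma dot_inv_eq' (dot circ : Group G) (h1 : IsSkewBrace dot circ) (σ : G) :
    dot.inv σ = gammaFun dot circ σ (circ.inv σ) := by
  letI := dot
  have h := circ_mul_eq' dot circ σ (circ.inv σ)
  rw [gmul_inv' circ σ, ← one_eq' dot circ h1] at h
  have h' : (1 : G) = σ * gammaFun dot circ σ (circ.inv σ) := h
  show σ⁻¹ = gammaFun dot circ σ (circ.inv σ)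
  exact inv_eq_of_mul_eq_one_right h'.symm

end Aux10

/-- For a bi-skew brace `(G,·,∘)`, every subgroup of `(G,∘)` is a left
ideal of `(G,·,∘)` iff every `γ(σ)` is a power automorphism of `(G,∘)`. -/
theorem stmt10 {G : Type*} (dot circ : Group G)
    (h1 : IsSkewBrace dot circ) (h2 : IsSkewBrace circ dot) :
    (∀ H : Set G, IsSubgroupOf circ H → IsLeftIdeal dot circ H) ↔
      ∀ σ τ : G, ∃ n : ℤ, gammaFun dot circ σ τ = circ.zpow n τ := by
  constructor
  · intro hLI σ τ
    letI := circ
    set H : Set G := {x | ∃ n : ℤ, circ.zpow n τ = x} with hHdef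
    have hsub : IsSubgroupOf circ H := by
      refine ⟨⟨0, zpow_zero τ⟩, ?_, ?_⟩
      · rintro a ⟨m, rfl⟩ b ⟨n, rfl⟩
        exact ⟨m + n, zpow_add τ m n⟩
      · rintro a ⟨m, rfl⟩
        exact ⟨-m, zpow_neg τ m⟩
    obtain ⟨n, hn⟩ := (hLI H hsub).2 σ τ ⟨1, zpow_one τ⟩
    exact ⟨n, hn.symm⟩
  · intro hpow H hH
    have hone : dot.one ∈ H := by rw [one_eq' dot circ h1]; exact hH.1
    refine ⟨⟨hone, ?_, ?_⟩, ?_⟩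
    · intro a ha b hb
      obtain ⟨n, hn⟩ := hpow (circ.inv a) b
      have hx : gammaFun dot circ (circ.inv a) b ∈ H := by
        rw [hn]; exact zpow_mem' circ hH hb n
      have key : dot.mul a b = circ.mul a (gammaFun dot circ (circ.inv a) b) := by
        rw [circ_mul_eq' dot circ a (gammaFun dot circ (circ.inv a) b),
          gamma_inv_gamma' dot circ h1 a b]
      rw [key]
      exact hH.2.1 a ha _ hx
    · intro a ha
      obtain ⟨n, hn⟩ := hpow a (circ.inv a)
      have key : dot.inv a = circ.zpow n (circ.inv a) := by
        rw [dot_inv_eq' dot circ h1 a, hn]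
      rw [key]
      exact zpow_mem' circ hH (hH.2.2 a ha) n
    · intro σ τ hτ
      obtain ⟨n, hn⟩ := hpow σ τ
      rw [hn]
      exact zpow_mem' circ hH hτ n
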